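/- Under the constraints x₁₁ = x₁₃x₂₁/x₂₃ + x₂₂ − x₁₂x₂₃/x₁₃, x₃₁ = x₂₁(x₁₂x₂₃ + x₁₃(x₃₃−x₂₂))/(x₁₃x₂₃), x₃₂ = x₁₂(x₁₂x₂₃ + x₁₃(x₃₃−x₂₂))/x₁₃² (with x₁₃, x₂₃ ≠ 0), the Casimir functions of the 3×3 matrix X are: f₀(X) = (x₁₃x₂₂ − x₁₂x₂₃)²(x₂₁x₁₃² + x₂₃x₃₃x₁₃ + x₁₂x₂₃²)/(x₁₃³x₂₃), f₁(X) = (x₁₃x₂₂ − x₁₂x₂₃)(2x₂₁x₁₃² + x₂₃(x₂₂+2x₃₃)x₁₃ + x₁₂x₂₃²)/(x₁₃²x₂₃), f₂(X) = x₁₃x₂₁/x₂₃ + 2x₂₂ − x₁₂x₂₃/x₁₃ + x₃₃. -/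

import Mathlib

open Matrix

theorem stmt14 (X : Matrix (Fin 3) (Fin 3) ℂ)
    (h13 : X 0 2 ≠ 0) (h23 : X 1 2 ≠ 0)
    (hx11 : X 0 0 = X 0 2 * X 1 0 / X 1 2 + X 1 1 - X 0 1 * X 1 2 / X 0 2)
    (hx31 : X 2 0 = X 1 0 * (X 0 1 * X 1 2 + X 0 2 * (X 2 2 - X 1 1)) / (X 0 2 * X 1 2))
    (hx32 : X 2 1 = X 0 1 * (X 0 1 * X 1 2 + X 0 2 * (X 2 2 - X 1 1)) / (X 0 2) ^ 2) :
    X.det = (X 0 2 * X 1 1 - X 0 1 * X 1 2) ^ 2 *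
        (X 1 0 * (X 0 2) ^ 2 + X 1 2 * X 2 2 * X 0 2 + X 0 1 * (X 1 2) ^ 2) /
        ((X 0 2) ^ 3 * X 1 2) ∧
    (X 0 0 * X 1 1 - X 0 1 * X 1 0) + (X 0 0 * X 2 2 - X 0 2 * X 2 0)
        + (X 1 1 * X 2 2 - X 1 2 * X 2 1) =
      (X 0 2 * X 1 1 - X 0 1 * X 1 2) *
        (2 * X 1 0 * (X 0 2) ^ 2 + X 1 2 * (X 1 1 + 2 * X 2 2) * X 0 2 + X 0 1 * (X 1 2) ^ 2) /
        ((X 0 2) ^ 2 * X 1 2) ∧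
    X.trace = X 0 2 * X 1 0 / X 1 2 + 2 * X 1 1 - X 0 1 * X 1 2 / X 0 2 + X 2 2 := by
  have H11 : X 0 0 * (X 0 2 * X 1 2) =
      X 0 2 ^ 2 * X 1 0 + X 1 1 * X 0 2 * X 1 2 - X 0 1 * X 1 2 ^ 2 := by
    rw [hx11]; field_simp
  have H31 : X 2 0 * (X 0 2 * X 1 2) =
      X 1 0 * (X 0 1 * X 1 2 + X 0 2 * (X 2 2 - X 1 1)) := by
    rw [hx31]; field_simp
  have H32 : X 2 1 * X 0 2 ^ 2 =
      X 0 1 * (X 0 1 * X 1 2 + X 0 2 * (X 2 2 - X 1 1)) := by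
    rw [hx32]; field_simp
  refine ⟨?_, ?_, ?_⟩
  · rw [Matrix.det_fin_three, eq_div_iff (mul_ne_zero (pow_ne_zero 3 h13) h23)]
    linear_combination
      (X 0 2 ^ 2 * X 1 1 * X 2 2 - X 0 1 * X 1 2 * (X 0 1 * X 1 2 + X 0 2 * (X 2 2 - X 1 1))) * H11
      + X 0 2 ^ 2 * (X 0 1 * X 1 2 - X 0 2 * X 1 1) * H31
      + X 0 2 * X 1 2 * (X 0 2 * X 1 0 - X 0 0 * X 1 2) * H32
  · rw [eq_div_iff (mul_ne_zero (pow_ne_zero 2 h13) h23)]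
    linear_combination
      X 0 2 * (X 1 1 + X 2 2) * H11 - X 0 2 ^ 2 * H31 - X 1 2 ^ 2 * H32
  · rw [Matrix.trace_fin_three, hx11]
    ring
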